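/- arXiv:2107.14217 — 2 statements merged into one kernel-verified Lean document; each statement's English description precedes it below -/
import Mathlib

section
/- Let ν be a doubling measure on ℝⁿ with doubling constant C. With β := C³/(1+C³) ∈ (0,1), for every x ∈ ℝⁿ, r > 0, and integer k ≥ 1, the thin annulus satisfies ν(B(x,r) \ B(x,(1−2⁻ᵏ)r)) ≤ β^{k−1} ν(B(x,r)). -/
open MeasureTheory Metric Set Real Filter
noncomputable section

lemma cover_bound {n : ℕ} {C : ℝ} (hC : 1 ≤ C)
    (ν : Measure (EuclideanSpace ℝ (Fin n)))
    (hdoub : ∀ (x : EuclideanSpace ℝ (Fin n)) (r : ℝ), 0 < r →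
      ν (Metric.ball x (2*r)) ≤ ENNReal.ofReal C * ν (Metric.ball x r))
    (x : EuclideanSpace ℝ (Fin n)) (s ρ : ℝ) (hs : 0 < s) (hρ : 0 < ρ) :
    ν (ball x (s + 3*ρ) \ ball x (s + ρ)) ≤
      ENNReal.ofReal (C^3) * ν (ball x (s + ρ) \ ball x (s - ρ)) := by
  have hC0 : (0:ℝ) ≤ C := by linarith
  -- maximal 2ρ-separated subset of the sphere of radius s
  obtain ⟨M, -, hMmax⟩ := zorn_subset_nonempty
      {M : Set (EuclideanSpace ℝ (Fin n)) |
        M ⊆ sphere x s ∧ M.Pairwise fun a b => 2*ρ ≤ dist a b}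
      (fun c hc hchain _ => by
        refine ⟨⋃₀ c, ⟨?_, ?_⟩, fun t ht => subset_sUnion_of_mem ht⟩
        · exact sUnion_subset fun t ht => (hc ht).1
        · intro a ha b hb hab
          obtain ⟨ta, hta, hat⟩ := ha
          obtain ⟨tb, htb, hbt⟩ := hb
          rcases hchain.total hta htb with h | h
          · exact (hc htb).2 (h hat) hbt hab
          · exact (hc hta).2 hat (h hbt) hab)
      ∅ ⟨empty_subset _, pairwise_empty _⟩
  obtain ⟨⟨hMsub, hMsep⟩, hmax⟩ := hMmax
  -- net property
  have hMnet : ∀ p ∈ sphere x s, ∃ m ∈ M, dist p m < 2*ρ := by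
    intro p hp
    by_contra h
    push_neg at h
    have hMp : insert p M ∈ {M : Set (EuclideanSpace ℝ (Fin n)) |
        M ⊆ sphere x s ∧ M.Pairwise fun a b => 2*ρ ≤ dist a b} := by
      refine ⟨insert_subset hp hMsub, hMsep.insert ?_⟩
      intro b hb hbp
      exact ⟨h b hb, by rw [dist_comm]; exact h b hb⟩
    have : p ∈ M := hmax hMp (subset_insert _ _) (mem_insert _ _)
    have := h p this
    simp at this
    linarith
  -- disjointness of small balls
  have hdisj : M.PairwiseDisjoint (fun m => ball m ρ) := by
    intro a ha b hb hab
    exact ball_disjoint_ball (by have := hMsep ha hb hab; linarith)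
  have hMc : M.Countable :=
    hdisj.countable_of_isOpen (fun m _ => isOpen_ball)
      (fun m _ => nonempty_ball.2 hρ)
  -- covering property
  have hcover : ball x (s + 3*ρ) \ ball x (s + ρ) ⊆ ⋃ m ∈ M, ball m (8*ρ) := by
    rintro z ⟨hz1, hz2⟩
    rw [mem_ball] at hz1
    rw [mem_ball] at hz2
    push_neg at hz2
    set d : ℝ := dist z x with hd
    have hd0 : 0 < d := by linarith
    set z' : EuclideanSpace ℝ (Fin n) := x + (s/d) • (z - x) with hz'
    have hzx : ‖z - x‖ = d := by rw [hd, dist_eq_norm]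
    have hz'x : dist z' x = s := by
      rw [dist_eq_norm, hz']
      simp only [add_sub_cancel_left, norm_smul, hzx]
      rw [Real.norm_eq_abs, abs_of_pos (by positivity)]
      field_simp
    have hzz' : dist z z' = d - s := by
      rw [dist_eq_norm]
      have : z - z' = (1 - s/d) • (z - x) := by
        rw [hz']
        module
      rw [this, norm_smul, hzx, Real.norm_eq_abs,
        abs_of_nonneg (by rw [sub_nonneg]; rw [div_le_one hd0]; linarith)]
      field_simp
    obtain ⟨m, hm, hpm⟩ := hMnet z' (mem_sphere.2 hz'x)
    refine mem_biUnion hm (mem_ball.2 ?_)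
    calc dist z m ≤ dist z z' + dist z' m := dist_triangle _ _ _
      _ < (d - s) + 2*ρ := by rw [hzz']; linarith
      _ ≤ 8*ρ := by linarith
  -- small balls live in the inner shell
  have hshell : ∀ m ∈ M, ball m ρ ⊆ ball x (s + ρ) \ ball x (s - ρ) := by
    intro m hm w hw
    rw [mem_ball] at hw
    have hmx : dist m x = s := hMsub hm
    constructor
    · rw [mem_ball]
      calc dist w x ≤ dist w m + dist m x := dist_triangle _ _ _
        _ < s + ρ := by linarith
    · rw [mem_ball]
      intro hcon
      have := dist_triangle m w x
      rw [dist_comm m w] at this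
      linarith
  -- three doublings
  have hdub3 : ∀ m : EuclideanSpace ℝ (Fin n),
      ν (ball m (8*ρ)) ≤ ENNReal.ofReal (C^3) * ν (ball m ρ) := by
    intro m
    have h1 := hdoub m (4*ρ) (by positivity)
    have h2 := hdoub m (2*ρ) (by positivity)
    have h3 := hdoub m ρ hρ
    rw [show (2:ℝ)*(4*ρ) = 8*ρ by ring] at h1
    rw [show (2:ℝ)*(2*ρ) = 4*ρ by ring] at h2
    calc ν (ball m (8*ρ)) ≤ ENNReal.ofReal C * ν (ball m (4*ρ)) := h1
      _ ≤ ENNReal.ofReal C * (ENNReal.ofReal C * ν (ball m (2*ρ))) :=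
          mul_le_mul_right h2 _
      _ ≤ ENNReal.ofReal C * (ENNReal.ofReal C * (ENNReal.ofReal C * ν (ball m ρ))) :=
          mul_le_mul_right (mul_le_mul_right h3 _) _
      _ = ENNReal.ofReal (C^3) * ν (ball m ρ) := by
          rw [← mul_assoc, ← mul_assoc, ← ENNReal.ofReal_mul hC0,
            ← ENNReal.ofReal_mul (by positivity)]
          ring_nf
  calc ν (ball x (s + 3*ρ) \ ball x (s + ρ))
      ≤ ν (⋃ m ∈ M, ball m (8*ρ)) := measure_mono hcover
    _ ≤ ∑' m : M, ν (ball (m:EuclideanSpace ℝ (Fin n)) (8*ρ)) :=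
        measure_biUnion_le ν hMc _
    _ ≤ ∑' m : M, ENNReal.ofReal (C^3) * ν (ball (m:EuclideanSpace ℝ (Fin n)) ρ) :=
        ENNReal.tsum_le_tsum (fun m => hdub3 m)
    _ = ENNReal.ofReal (C^3) * ∑' m : M, ν (ball (m:EuclideanSpace ℝ (Fin n)) ρ) :=
        ENNReal.tsum_mul_left
    _ = ENNReal.ofReal (C^3) * ν (⋃ m ∈ M, ball m ρ) := by
        rw [measure_biUnion hMc hdisj (fun m _ => measurableSet_ball)]
    _ ≤ ENNReal.ofReal (C^3) * ν (ball x (s + ρ) \ ball x (s - ρ)) :=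
        mul_le_mul_right (measure_mono (iUnion₂_subset hshell)) _

lemma step_bound {n : ℕ} {C : ℝ} (hC : 1 ≤ C)
    (ν : Measure (EuclideanSpace ℝ (Fin n)))
    (hdoub : ∀ (x : EuclideanSpace ℝ (Fin n)) (r : ℝ), 0 < r →
      ν (Metric.ball x (2*r)) ≤ ENNReal.ofReal C * ν (Metric.ball x r))
    (x : EuclideanSpace ℝ (Fin n)) (r : ℝ) (k : ℕ) (hr : 0 < r) (hk : 1 ≤ k) :
    ν (ball x r \ ball x ((1 - (2:ℝ)⁻¹^(k+1)) * r)) ≤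
      ENNReal.ofReal (C^3/(1+C^3)) *
        ν (ball x r \ ball x ((1 - (2:ℝ)⁻¹^k) * r)) := by
  have hC0 : (0:ℝ) < C := by linarith
  set c : ℝ := (2:ℝ)⁻¹^k with hcdef
  have hc0 : 0 < c := by positivity
  have hc1 : c ≤ 2⁻¹ := by
    rw [hcdef]
    calc (2:ℝ)⁻¹^k ≤ (2:ℝ)⁻¹^1 := by
          apply pow_le_pow_of_le_one (by norm_num) (by norm_num) (by omega)
      _ = 2⁻¹ := pow_one _
  have hsucc : (2:ℝ)⁻¹^(k+1) = c/2 := by rw [pow_succ]; ring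
  set ρ : ℝ := c/4 * r with hρdef
  set s : ℝ := (1 - 3*c/4) * r with hsdef
  have hρ0 : 0 < ρ := by positivity
  have hs0 : 0 < s := by nlinarith
  have key := cover_bound hC ν hdoub x s ρ hs0 hρ0
  rw [show s + 3*ρ = r by rw [hsdef, hρdef]; ring,
    show s + ρ = (1 - c/2) * r by rw [hsdef, hρdef]; ring,
    show s - ρ = (1 - c) * r by rw [hsdef, hρdef]; ring] at key
  rw [hsucc]
  set A' := ball x r \ ball x ((1 - c/2) * r) with hA'
  set Sh := ball x ((1 - c/2) * r) \ ball x ((1 - c) * r) with hSh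
  have hsub : (1 - c/2) * r < r := by nlinarith
  have hunion : ball x r \ ball x ((1 - c) * r) = Sh ∪ A' := by
    ext z
    simp only [hA', hSh, mem_diff, mem_union, mem_ball]
    constructor
    · rintro ⟨h1, h2⟩
      rcases lt_or_ge (dist z x) ((1 - c/2) * r) with h | h
      · exact Or.inl ⟨h, h2⟩
      · exact Or.inr ⟨h1, not_lt.2 h⟩
    · rintro (⟨h1, h2⟩ | ⟨h1, h2⟩)
      · exact ⟨by linarith, h2⟩
      · rw [not_lt] at h2
        refine ⟨h1, not_lt.2 ?_⟩
        nlinarith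
  have hdisj2 : Disjoint Sh A' := by
    rw [Set.disjoint_left]
    rintro z ⟨hz1, -⟩ ⟨-, hz2⟩
    exact hz2 hz1
  have hmeasA' : MeasurableSet A' :=
    measurableSet_ball.diff measurableSet_ball
  have hAeq : ν (ball x r \ ball x ((1 - c) * r)) = ν Sh + ν A' := by
    rw [hunion, measure_union hdisj2 hmeasA']
  rw [hAeq]
  set u := ν A'
  set v := ν Sh
  have harith : u * ENNReal.ofReal (1 + C^3) ≤ ENNReal.ofReal (C^3) * (v + u) := by
    have h1 : u * ENNReal.ofReal (1 + C^3) = u + ENNReal.ofReal (C^3) * u := by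
      rw [ENNReal.ofReal_add zero_le_one (by positivity), ENNReal.ofReal_one,
        mul_add, mul_one, mul_comm u]
    rw [h1, mul_add]
    exact add_le_add key le_rfl
  have hpos : (0:ℝ) < 1 + C^3 := by positivity
  rw [ENNReal.ofReal_div_of_pos hpos]
  have hform : ENNReal.ofReal (C^3) / ENNReal.ofReal (1 + C^3) * (v + u)
      = ENNReal.ofReal (C^3) * (v + u) / ENNReal.ofReal (1 + C^3) := by
    rw [div_eq_mul_inv, div_eq_mul_inv]; ring
  rw [hform]
  rw [ENNReal.le_div_iff_mul_le (Or.inl (by simp [hpos])) (Or.inl ENNReal.ofReal_ne_top)]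
  exact harith

/-- If `ν` is doubling on ℝⁿ with constant `C` then, with
`β = C³/(1+C³) ∈ (0,1)`, for all `x`, `r > 0` and `k ≥ 1` one has
`ν(B(x,r) \ B(x,(1−2⁻ᵏ)r)) ≤ β^{k−1} ν(B(x,r))`. -/
theorem annulus_geometric_decay (n : ℕ) (C : ℝ) (hC : 1 ≤ C)
    (ν : Measure (EuclideanSpace ℝ (Fin n)))
    (hdoub : ∀ (x : EuclideanSpace ℝ (Fin n)) (r : ℝ), 0 < r →
      ν (Metric.ball x (2*r)) ≤ ENNReal.ofReal C * ν (Metric.ball x r)) :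
    (0 < C^3/(1+C^3) ∧ C^3/(1+C^3) < 1) ∧
    ∀ (x : EuclideanSpace ℝ (Fin n)) (r : ℝ) (k : ℕ), 0 < r → 1 ≤ k →
      ν (Metric.ball x r \ Metric.ball x ((1 - (2:ℝ)⁻¹^k) * r))
        ≤ ENNReal.ofReal ((C^3/(1+C^3))^(k-1)) * ν (Metric.ball x r) := by
  have hC0 : (0:ℝ) < C := by linarith
  have hpos : (0:ℝ) < 1 + C^3 := by positivity
  have hβ0 : (0:ℝ) < C^3/(1+C^3) := div_pos (by positivity) hpos
  refine ⟨⟨hβ0, (div_lt_one hpos).2 (by nlinarith)⟩, ?_⟩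
  intro x r k hr hk
  induction k, hk using Nat.le_induction with
  | base =>
    simp only [pow_zero, Nat.sub_self, ENNReal.ofReal_one, one_mul]
    exact measure_mono diff_subset
  | succ k hk ih =>
    calc ν (ball x r \ ball x ((1 - (2:ℝ)⁻¹^(k+1)) * r))
        ≤ ENNReal.ofReal (C^3/(1+C^3)) *
            ν (ball x r \ ball x ((1 - (2:ℝ)⁻¹^k) * r)) :=
          step_bound hC ν hdoub x r k hr hk
      _ ≤ ENNReal.ofReal (C^3/(1+C^3)) *
            (ENNReal.ofReal ((C^3/(1+C^3))^(k-1)) * ν (ball x r)) :=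
          mul_le_mul_right ih _
      _ = ENNReal.ofReal ((C^3/(1+C^3))^(k+1-1)) * ν (ball x r) := by
          rw [← mul_assoc, ← ENNReal.ofReal_mul hβ0.le]
          congr 2
          rw [show k+1-1 = (k-1)+1 by omega, pow_succ]
          ring
end
end

section
/- Let w be a doubling weight on ℝⁿ and ε > 0. Then there exists η > 0, depending only on the doubling constant of w and ε, such that for every radially decreasing nonnegative continuous function f supported in B(0,1+η) with f ≡ 1 on B(0,1), and for all x ∈ ℝⁿ and r > 0, one has 1 ≤ (f_r ∗ w)(x) / (χ_r ∗ w)(x) ≤ 1 + ε, where χ is the indicator of the unit ball and f_r(x) = r⁻ⁿ f(x/r). -/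
open MeasureTheory Metric Set Real Filter
noncomputable section
open scoped ENNReal

/-- `w` is a doubling weight on ℝⁿ with doubling constant `C`: it is nonnegative,
locally integrable, nontrivial (every ball has positive mass) and satisfies the
doubling inequality for the measure `w dx`. -/
def DoublingWeight (n : ℕ) (C : ℝ) (w : EuclideanSpace ℝ (Fin n) → ℝ) : Prop :=
  (∀ x, 0 ≤ w x) ∧ MeasureTheory.LocallyIntegrable w ∧
  (∀ (x : EuclideanSpace ℝ (Fin n)) (r : ℝ), 0 < r → 0 < ∫ y in Metric.ball x r, w y) ∧
  (∀ (x : EuclideanSpace ℝ (Fin n)) (r : ℝ), 0 < r →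
    (∫ y in Metric.ball x (2*r), w y) ≤ C * ∫ y in Metric.ball x r, w y)

variable {n : ℕ}

lemma doubling_pow (μ : Measure (EuclideanSpace ℝ (Fin n))) (D : ℝ≥0∞)
    (hD : ∀ (y : EuclideanSpace ℝ (Fin n)) (s : ℝ), 0 < s → μ (ball y (2*s)) ≤ D * μ (ball y s))
    (k : ℕ) : ∀ (y : EuclideanSpace ℝ (Fin n)) (s : ℝ), 0 < s →
      μ (ball y (2^k * s)) ≤ D^k * μ (ball y s) := by
  induction k with
  | zero => intro y s _; simp
  | succ k ih =>
    intro y s hs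
    have h1 : (2:ℝ)^(k+1) * s = 2^k * (2*s) := by ring
    rw [h1]
    calc μ (ball y (2^k * (2*s))) ≤ D^k * μ (ball y (2*s)) := ih y (2*s) (by linarith)
    _ ≤ D^k * (D * μ (ball y s)) := mul_le_mul_right (hD y s hs) _
    _ = D^(k+1) * μ (ball y s) := by rw [pow_succ, mul_assoc]

lemma halving (μ : Measure (EuclideanSpace ℝ (Fin n))) (D : ℝ≥0∞)
    (hD : ∀ (y : EuclideanSpace ℝ (Fin n)) (s : ℝ), 0 < s → μ (ball y (2*s)) ≤ D * μ (ball y s))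
    (x : EuclideanSpace ℝ (Fin n)) (r h : ℝ) (hh : 0 < h) (hhr : h ≤ r) :
    μ (ball x r \ ball x (r - h/2)) ≤ D^5 * μ (ball x (r - h/2) \ closedBall x (r - h)) := by
  obtain ⟨t, ht_def⟩ : ∃ t : ℝ, t = r - 3*h/4 := ⟨_, rfl⟩
  have hr0 : 0 < r := lt_of_lt_of_le hh hhr
  have ht0 : 0 < t := by rw [ht_def]; linarith
  set Aout := ball x r \ ball x (r - h/2) with hAout
  set H := ball x (r - h/2) \ closedBall x (r - h) with hH
  set p : EuclideanSpace ℝ (Fin n) → EuclideanSpace ℝ (Fin n) :=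
    fun z => x + (t / ‖z - x‖) • (z - x) with hp_def
  have hmem : ∀ z ∈ Aout, ‖p z - x‖ = t ∧ ‖z - p z‖ ≤ 3*h/4 := by
    intro z hz
    obtain ⟨hz1, hz2⟩ := hz
    rw [mem_ball, dist_eq_norm] at hz1
    rw [mem_ball, dist_eq_norm, not_lt] at hz2
    set ρ := ‖z - x‖ with hρ
    have hρ0 : 0 < ρ := by linarith
    have htρ : t ≤ ρ := by rw [ht_def]; linarith
    have e1 : p z - x = (t/ρ) • (z - x) := by simp only [hp_def]; abel
    have e2 : z - p z = (1 - t/ρ) • (z - x) := by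
      simp only [hp_def]; rw [sub_smul, one_smul]; abel
    constructor
    · rw [e1, norm_smul, Real.norm_eq_abs, abs_of_nonneg (div_nonneg ht0.le hρ0.le), ← hρ]
      field_simp
    · rw [e2, norm_smul, Real.norm_eq_abs,
        abs_of_nonneg (by rw [sub_nonneg]; exact div_le_one_of_le₀ htρ hρ0.le), ← hρ]
      have : (1 - t/ρ) * ρ = ρ - t := by field_simp
      rw [this, ht_def]; linarith
  have hsub : ∀ z ∈ Aout, closedBall (p z) (h/8) ⊆ H := by
    intro z hz y hy
    obtain ⟨hpt, hpd⟩ := hmem z hz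
    rw [mem_closedBall] at hy
    have h5 : dist (p z) x = t := by rw [dist_eq_norm]; exact hpt
    have h4 : dist (p z) y ≤ h/8 := by rw [dist_comm]; exact hy
    constructor
    · rw [mem_ball]
      have h3 : dist y x ≤ dist y (p z) + dist (p z) x := dist_triangle _ _ _
      rw [h5] at h3
      rw [ht_def] at h3; linarith
    · rw [mem_closedBall, not_le]
      have h3 : dist (p z) x ≤ dist (p z) y + dist y x := dist_triangle _ _ _
      rw [h5] at h3
      rw [ht_def] at h3; linarith
  obtain ⟨u, hu_sub, hu_disj, hu_cov⟩ :=
    Vitali.exists_disjoint_subfamily_covering_enlargement_closedBall Aout p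
      (fun _ => h/8) (h/8) (fun a _ => le_refl _) 4 (by norm_num)
  have hcov2 : ∀ a ∈ Aout, ∃ b ∈ u, a ∈ ball (p b) (2*h) := by
    intro a ha
    obtain ⟨b, hb, hball⟩ := hu_cov a ha
    refine ⟨b, hb, ?_⟩
    have h1 : p a ∈ closedBall (p b) (4 * (h/8)) :=
      hball (mem_closedBall_self (by linarith))
    rw [mem_closedBall, dist_eq_norm] at h1
    rw [mem_ball, dist_eq_norm]
    have h2 := (hmem a ha).2
    calc ‖a - p b‖ ≤ ‖a - p a‖ + ‖p a - p b‖ := norm_sub_le_norm_sub_add_norm_sub _ _ _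
    _ ≤ 3*h/4 + 4*(h/8) := add_le_add h2 h1
    _ < 2*h := by linarith
  have hcount : u.Countable := by
    have hd : u.PairwiseDisjoint (fun b => ball (p b) (h/8)) :=
      hu_disj.mono fun b => ball_subset_closedBall
    exact hd.countable_of_isOpen (fun b _ => isOpen_ball)
      (fun b _ => nonempty_ball.2 (by linarith))
  calc μ Aout ≤ μ (⋃ b ∈ u, ball (p b) (2*h)) := by
        apply measure_mono
        intro a ha
        obtain ⟨b, hb, hab⟩ := hcov2 a ha
        exact mem_biUnion hb hab
  _ ≤ ∑' b : u, μ (ball (p b) (2*h)) := measure_biUnion_le μ hcount _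
  _ ≤ ∑' b : u, D^5 * μ (closedBall (p b) (h/8)) := by
      refine ENNReal.tsum_le_tsum fun b => ?_
      calc μ (ball (p b) (2*h)) ≤ μ (ball (p b) (2^5 * (h/8))) := by
            apply measure_mono; apply ball_subset_ball; linarith
      _ ≤ D^5 * μ (ball (p b) (h/8)) := doubling_pow μ D hD 5 _ _ (by linarith)
      _ ≤ D^5 * μ (closedBall (p b) (h/8)) :=
          mul_le_mul_right (measure_mono ball_subset_closedBall) _
  _ = D^5 * ∑' b : u, μ (closedBall (p b) (h/8)) := ENNReal.tsum_mul_left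
  _ = D^5 * μ (⋃ b ∈ u, closedBall (p b) (h/8)) := by
      rw [measure_biUnion hcount hu_disj (fun b _ => measurableSet_closedBall)]
  _ ≤ D^5 * μ H := mul_le_mul_right
      (measure_mono (iUnion₂_subset fun b hb => hsub b (hu_sub hb))) _

lemma annulus_step (μ : Measure (EuclideanSpace ℝ (Fin n))) (D : ℝ≥0∞)
    (hD : ∀ (y : EuclideanSpace ℝ (Fin n)) (s : ℝ), 0 < s → μ (ball y (2*s)) ≤ D * μ (ball y s))
    (x : EuclideanSpace ℝ (Fin n)) (r h : ℝ) (hh : 0 < h) (hhr : h ≤ r) :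
    (D^5 + 1) * μ (ball x r \ closedBall x (r - h/2))
      ≤ D^5 * μ (ball x r \ closedBall x (r - h)) := by
  have hkey := halving μ D hD x r h hh hhr
  set Aout := ball x r \ ball x (r - h/2) with hAout
  set H := ball x (r - h/2) \ closedBall x (r - h) with hH
  have hAH : Aout ∪ H = ball x r \ closedBall x (r - h) :=
    diff_union_diff_cancel (ball_subset_ball (by linarith))
      (closedBall_subset_ball (by linarith))
  have hdisj : Disjoint Aout H := Set.disjoint_left.2 fun a haA haH => haA.2 haH.1
  have hmeas : μ Aout + μ H = μ (ball x r \ closedBall x (r - h)) := by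
    rw [← hAH, measure_union hdisj (measurableSet_ball.diff measurableSet_closedBall)]
  have hsub2 : ball x r \ closedBall x (r - h/2) ⊆ Aout :=
    diff_subset_diff_right ball_subset_closedBall
  calc (D^5+1) * μ (ball x r \ closedBall x (r - h/2))
      ≤ (D^5+1) * μ Aout := mul_le_mul_right (measure_mono hsub2) _
  _ = D^5 * μ Aout + μ Aout := by ring
  _ ≤ D^5 * μ Aout + D^5 * μ H := add_le_add_right hkey _
  _ = D^5 * (μ Aout + μ H) := by ring
  _ = D^5 * μ (ball x r \ closedBall x (r - h)) := by rw [hmeas]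

lemma annulus_decay (μ : Measure (EuclideanSpace ℝ (Fin n))) (D : ℝ≥0∞)
    (hD : ∀ (y : EuclideanSpace ℝ (Fin n)) (s : ℝ), 0 < s → μ (ball y (2*s)) ≤ D * μ (ball y s))
    (x : EuclideanSpace ℝ (Fin n)) (r : ℝ) (hr : 0 < r) (m : ℕ) :
    (D^5+1)^m * μ (ball x r \ closedBall x (r - r/2^m))
      ≤ (D^5)^m * μ (ball x r) := by
  induction m with
  | zero => simpa using measure_mono (diff_subset (s := ball x r))
  | succ m ih =>
    have h2m : (1:ℝ) ≤ 2^m := one_le_pow₀ one_le_two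
    have hstep := annulus_step μ D hD x r (r/2^m) (by positivity)
      (div_le_self hr.le h2m)
    have e : r - (r/2^m)/2 = r - r/2^(m+1) := by rw [pow_succ]; ring
    rw [e] at hstep
    calc (D^5+1)^(m+1) * μ (ball x r \ closedBall x (r - r/2^(m+1)))
        = (D^5+1)^m * ((D^5+1) * μ (ball x r \ closedBall x (r - r/2^(m+1)))) := by
          rw [pow_succ]; ring
    _ ≤ (D^5+1)^m * (D^5 * μ (ball x r \ closedBall x (r - r/2^m))) :=
        mul_le_mul_right hstep _
    _ = D^5 * ((D^5+1)^m * μ (ball x r \ closedBall x (r - r/2^m))) := by ring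
    _ ≤ D^5 * ((D^5)^m * μ (ball x r)) := mul_le_mul_right ih _
    _ = (D^5)^(m+1) * μ (ball x r) := by rw [pow_succ]; ring

/-- For a doubling weight `w` with constant `C` and `ε > 0` there is `η > 0`
depending only on `C` and `ε` such that for every radially decreasing nonnegative continuous
`f` supported in `B(0,1+η)` with `f ≡ 1` on `B(0,1)`,
`1 ≤ (f_r ∗ w)(x)/(χ_r ∗ w)(x) ≤ 1+ε` for all `x, r`. Here
`(χ_r ∗ w)(x) = r⁻ⁿ w(B(x,r))` where `χ` is the indicator of the unit ball. -/
theorem smooth_vs_rough_average (C ε : ℝ) (hε : 0 < ε) :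
    ∃ η > (0:ℝ), ∀ (n : ℕ) (w f : EuclideanSpace ℝ (Fin n) → ℝ),
      DoublingWeight n C w →
      Continuous f → (∀ x, 0 ≤ f x) →
      (∀ a b : EuclideanSpace ℝ (Fin n), ‖a‖ ≤ ‖b‖ → f b ≤ f a) →
      (Function.support f ⊆ Metric.ball 0 (1+η)) →
      (∀ x ∈ Metric.ball (0 : EuclideanSpace ℝ (Fin n)) 1, f x = 1) →
      ∀ (x : EuclideanSpace ℝ (Fin n)) (r : ℝ), 0 < r →
        (r^n)⁻¹ * (∫ y in Metric.ball x r, w y) ≤ (∫ z, (r^n)⁻¹ * f (r⁻¹ • (x - z)) * w z) ∧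
        (∫ z, (r^n)⁻¹ * f (r⁻¹ • (x - z)) * w z)
          ≤ (1+ε) * ((r^n)⁻¹ * ∫ y in Metric.ball x r, w y) := by
  obtain ⟨c, hc_def⟩ : ∃ c : ℝ, c = max C 2 := ⟨_, rfl⟩
  have hc2 : 2 ≤ c := hc_def ▸ le_max_right _ _
  have hcC : C ≤ c := hc_def ▸ le_max_left _ _
  have hc0 : 0 < c := by linarith
  have hc5 : 0 < c^5 + 1 := by positivity
  obtain ⟨θ, hθ_def⟩ : ∃ θ : ℝ, θ = c^5 / (c^5+1) := ⟨_, rfl⟩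
  have hθ0 : 0 ≤ θ := by rw [hθ_def]; positivity
  have hθ1 : θ < 1 := hθ_def ▸ (div_lt_one hc5).2 (by linarith)
  obtain ⟨m, hm⟩ : ∃ m : ℕ, θ^m < ε / c := exists_pow_lt_of_lt_one (by positivity) hθ1
  have hcm : c * θ^m < ε := by
    rw [lt_div_iff₀ hc0] at hm; linarith [hm]
  have h2m : (1:ℝ) ≤ 2^m := one_le_pow₀ one_le_two
  refine ⟨1/2^m, by positivity, ?_⟩
  intro n w f hw hfc hf0 hfmono hfsupp hfone x r hr
  obtain ⟨hw0, hwloc, hwpos, hwdbl⟩ := hw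
  have hwm := hwloc.aestronglyMeasurable
  obtain ⟨w', hw'_def⟩ : ∃ w', w' = hwm.mk w := ⟨_, rfl⟩
  have hw'meas : Measurable w' := hw'_def ▸ hwm.stronglyMeasurable_mk.measurable
  have hww' : w =ᵐ[volume] w' := hw'_def ▸ hwm.ae_eq_mk
  obtain ⟨μ, hμ_def⟩ : ∃ μ : Measure (EuclideanSpace ℝ (Fin n)),
      μ = volume.withDensity (fun z => ENNReal.ofReal (w' z)) := ⟨_, rfl⟩
  have hball_int : ∀ (y : EuclideanSpace ℝ (Fin n)) (s : ℝ),
      IntegrableOn w (ball y s) volume := fun y s =>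
    (hwloc.integrableOn_isCompact (isCompact_closedBall y s)).mono_set ball_subset_closedBall
  have hμball : ∀ (y : EuclideanSpace ℝ (Fin n)) (s : ℝ),
      μ (ball y s) = ENNReal.ofReal (∫ z in ball y s, w z) := by
    intro y s
    rw [hμ_def, withDensity_apply _ measurableSet_ball]
    have h1 : ∫⁻ z in ball y s, ENNReal.ofReal (w' z) = ∫⁻ z in ball y s, ENNReal.ofReal (w z) :=
      lintegral_congr_ae ((ae_restrict_of_ae hww'.symm).mono fun z hz => by simp only [hz])
    rw [h1, ← ofReal_integral_eq_lintegral_ofReal (hball_int y s) (ae_of_all _ hw0)]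
  have hμD : ∀ (y : EuclideanSpace ℝ (Fin n)) (s : ℝ), 0 < s →
      μ (ball y (2*s)) ≤ ENNReal.ofReal c * μ (ball y s) := by
    intro y s hs
    rw [hμball, hμball, ← ENNReal.ofReal_mul hc0.le]
    apply ENNReal.ofReal_le_ofReal
    have hI0 : 0 ≤ ∫ z in ball y s, w z := setIntegral_nonneg measurableSet_ball fun z _ => hw0 z
    calc ∫ z in ball y (2*s), w z ≤ C * ∫ z in ball y s, w z := hwdbl y s hs
    _ ≤ c * ∫ z in ball y s, w z := mul_le_mul_of_nonneg_right hcC hI0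
  have hμsphere : ∀ (y : EuclideanSpace ℝ (Fin n)) (s : ℝ), 0 < s → μ (sphere y s) = 0 := by
    intro y s hs
    have hvol : volume (sphere y s) = 0 := by
      rcases Nat.eq_zero_or_pos n with hn | hn
      · have he : sphere y s = (∅ : Set (EuclideanSpace ℝ (Fin n))) := by
          ext z
          simp only [mem_sphere, mem_empty_iff_false, iff_false]
          subst hn
          rw [Subsingleton.elim z y, dist_self]
          exact hs.ne
        rw [he]; simp
      · haveI : Nonempty (Fin n) := ⟨⟨0, hn⟩⟩
        haveI : Nontrivial (EuclideanSpace ℝ (Fin n)) := inferInstance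
        exact Measure.addHaar_sphere volume y s
    rw [hμ_def, withDensity_apply _ isClosed_sphere.measurableSet,
      setLIntegral_measure_zero _ _ hvol]
  -- the key doubling estimate
  have hkey : ∀ (y : EuclideanSpace ℝ (Fin n)) (s : ℝ), 0 < s →
      (∫ z in ball y ((1+1/2^m)*s), w z) ≤ (1+ε) * ∫ z in ball y s, w z := by
    intro y s hs
    obtain ⟨R, hR_def⟩ : ∃ R : ℝ, R = (1+1/2^m)*s := ⟨_, rfl⟩
    have hu0 : (0:ℝ) < 1/2^m := by positivity
    have hu1 : (1:ℝ)/2^m ≤ 1 := by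
      rw [div_le_one (by positivity)]; exact h2m
    have hR0 : 0 < R := by rw [hR_def]; nlinarith
    have hI0 : 0 ≤ ∫ z in ball y s, w z := setIntegral_nonneg measurableSet_ball fun z _ => hw0 z
    have hdecay := annulus_decay μ (ENNReal.ofReal c) hμD y R hR0 m
    have hRs : R - R/2^m ≤ s := by
      have e : R - R/2^m = s * (1 - (1/2^m)*(1/2^m)) := by
        rw [hR_def]; field_simp; ring
      rw [e]; nlinarith
    have hsplit : μ (ball y R) ≤ μ (ball y s) + μ (ball y R \ closedBall y (R - R/2^m)) := by
      have h1 : ball y R ⊆ closedBall y (R - R/2^m) ∪ (ball y R \ closedBall y (R - R/2^m)) :=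
        fun z hz => (em (z ∈ closedBall y (R - R/2^m))).imp id fun h => ⟨hz, h⟩
      calc μ (ball y R) ≤ μ (closedBall y (R - R/2^m) ∪ (ball y R \ closedBall y (R - R/2^m))) :=
            measure_mono h1
      _ ≤ μ (closedBall y (R - R/2^m)) + μ (ball y R \ closedBall y (R - R/2^m)) :=
            measure_union_le _ _
      _ ≤ μ (ball y s) + μ (ball y R \ closedBall y (R - R/2^m)) := by
            refine add_le_add_left ?_ _
            calc μ (closedBall y (R - R/2^m)) ≤ μ (closedBall y s) :=
                  measure_mono (closedBall_subset_closedBall hRs)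
            _ = μ (ball y s ∪ sphere y s) := by rw [ball_union_sphere]
            _ ≤ μ (ball y s) + μ (sphere y s) := measure_union_le _ _
            _ = μ (ball y s) := by rw [hμsphere y s hs, add_zero]
    have hballR : μ (ball y R) ≤ ENNReal.ofReal c * μ (ball y s) := by
      calc μ (ball y R) ≤ μ (ball y (2*s)) := by
            apply measure_mono; apply ball_subset_ball; rw [hR_def]; nlinarith
      _ ≤ ENNReal.ofReal c * μ (ball y s) := hμD y s hs
    have hK1 : (ENNReal.ofReal c)^5 + 1 = ENNReal.ofReal (c^5+1) := by
      rw [← ENNReal.ofReal_pow hc0.le, ENNReal.ofReal_add (by positivity) zero_le_one,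
        ENNReal.ofReal_one]
    have hAm : μ (ball y R \ closedBall y (R - R/2^m))
        ≤ ENNReal.ofReal (c * θ^m * ∫ z in ball y s, w z) := by
      have h2 : ((ENNReal.ofReal c)^5+1)^m * μ (ball y R \ closedBall y (R - R/2^m))
          ≤ ENNReal.ofReal ((c^5)^m * (c * ∫ z in ball y s, w z)) := by
        refine le_trans (le_trans hdecay (mul_le_mul_right hballR _)) (le_of_eq ?_)
        rw [hμball, ← ENNReal.ofReal_mul hc0.le, ← ENNReal.ofReal_pow hc0.le,
          ← ENNReal.ofReal_pow (show (0:ℝ) ≤ c^5 by positivity),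
          ← ENNReal.ofReal_mul (show (0:ℝ) ≤ (c^5)^m by positivity)]
      rw [hK1, ← ENNReal.ofReal_pow (show (0:ℝ) ≤ c^5+1 by positivity)] at h2
      have h3 : μ (ball y R \ closedBall y (R - R/2^m))
          ≤ ENNReal.ofReal ((c^5)^m * (c * ∫ z in ball y s, w z)) / ENNReal.ofReal ((c^5+1)^m) := by
        refine (ENNReal.le_div_iff_mul_le (Or.inl ?_) (Or.inl ENNReal.ofReal_ne_top)).2 ?_
        · simp only [ne_eq, ENNReal.ofReal_eq_zero, not_le]; positivity
        · rw [mul_comm]; exact h2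
      refine le_trans h3 (le_of_eq ?_)
      rw [← ENNReal.ofReal_div_of_pos (by positivity)]
      congr 1
      rw [hθ_def, div_pow]
      field_simp
    have hfinal : μ (ball y R) ≤ ENNReal.ofReal ((1+ε) * ∫ z in ball y s, w z) := by
      calc μ (ball y R) ≤ μ (ball y s) + μ (ball y R \ closedBall y (R - R/2^m)) := hsplit
      _ ≤ ENNReal.ofReal (∫ z in ball y s, w z)
            + ENNReal.ofReal (c * θ^m * ∫ z in ball y s, w z) := by
            rw [hμball]; exact add_le_add_right hAm _
      _ = ENNReal.ofReal ((∫ z in ball y s, w z) + c * θ^m * ∫ z in ball y s, w z) := by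
            rw [ENNReal.ofReal_add hI0 (by positivity)]
      _ ≤ ENNReal.ofReal ((1+ε) * ∫ z in ball y s, w z) := by
            apply ENNReal.ofReal_le_ofReal; nlinarith
    rw [hμball] at hfinal
    rw [← hR_def]
    exact (ENNReal.ofReal_le_ofReal_iff (by positivity)).1 hfinal
  -- convolution bounds
  have hrn : (0:ℝ) < r^n := by positivity
  have hf1 : ∀ y, f y ≤ 1 := by
    intro y
    have h0 : f 0 = 1 := hfone 0 (mem_ball_self one_pos)
    have := hfmono 0 y (by simp)
    linarith
  obtain ⟨R, hR_def⟩ : ∃ R : ℝ, R = (1+1/2^m)*r := ⟨_, rfl⟩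
  have hg_nonneg : ∀ z, 0 ≤ (r^n)⁻¹ * f (r⁻¹ • (x - z)) * w z := fun z =>
    mul_nonneg (mul_nonneg (by positivity) (hf0 _)) (hw0 z)
  have hnorm : ∀ z : EuclideanSpace ℝ (Fin n), ‖r⁻¹ • (x - z)‖ = r⁻¹ * dist z x := by
    intro z
    rw [norm_smul, Real.norm_eq_abs, abs_of_pos (inv_pos.2 hr), dist_eq_norm, norm_sub_rev]
  have hmem1 : ∀ z ∈ ball x r, f (r⁻¹ • (x - z)) = 1 := by
    intro z hz
    apply hfone
    rw [mem_ball_zero_iff, hnorm]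
    rw [mem_ball] at hz
    calc r⁻¹ * dist z x < r⁻¹ * r := by
          exact mul_lt_mul_of_pos_left hz (inv_pos.2 hr)
    _ = 1 := inv_mul_cancel₀ hr.ne'
  have hmem2 : ∀ z, z ∉ ball x R → f (r⁻¹ • (x - z)) = 0 := by
    intro z hz
    by_contra hne
    apply hz
    have hz2 : r⁻¹ • (x - z) ∈ ball (0 : EuclideanSpace ℝ (Fin n)) (1+1/2^m) :=
      hfsupp (Function.mem_support.2 hne)
    rw [mem_ball_zero_iff, hnorm] at hz2
    rw [mem_ball, hR_def]
    calc dist z x = r * (r⁻¹ * dist z x) := by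
          rw [← mul_assoc, mul_inv_cancel₀ hr.ne', one_mul]
    _ < r * (1+1/2^m) := by
          exact mul_lt_mul_of_pos_left hz2 hr
    _ = (1+1/2^m)*r := by ring
  have hup_int : Integrable ((ball x R).indicator fun z => (r^n)⁻¹ * w z) volume :=
    (integrable_indicator_iff measurableSet_ball).2 ((hball_int x R).const_mul _)
  have hlow_int : Integrable ((ball x r).indicator fun z => (r^n)⁻¹ * w z) volume :=
    (integrable_indicator_iff measurableSet_ball).2 ((hball_int x r).const_mul _)
  have hg_meas : AEStronglyMeasurable (fun z => (r^n)⁻¹ * f (r⁻¹ • (x - z)) * w z) volume := by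
    apply AEStronglyMeasurable.mul _ hwm
    apply Continuous.aestronglyMeasurable
    exact continuous_const.mul (hfc.comp (by fun_prop))
  have hg_le : ∀ z, (r^n)⁻¹ * f (r⁻¹ • (x - z)) * w z
      ≤ (ball x R).indicator (fun z => (r^n)⁻¹ * w z) z := by
    intro z
    by_cases hz : z ∈ ball x R
    · rw [indicator_of_mem hz]
      calc (r^n)⁻¹ * f (r⁻¹ • (x - z)) * w z ≤ (r^n)⁻¹ * 1 * w z :=
            mul_le_mul_of_nonneg_right
              (mul_le_mul_of_nonneg_left (hf1 _) (by positivity)) (hw0 z)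
      _ = (r^n)⁻¹ * w z := by ring
    · rw [indicator_of_notMem hz, hmem2 z hz, mul_zero, zero_mul]
  have hg_int : Integrable (fun z => (r^n)⁻¹ * f (r⁻¹ • (x - z)) * w z) volume := by
    refine hup_int.mono' hg_meas (ae_of_all _ fun z => ?_)
    rw [Real.norm_eq_abs, abs_of_nonneg (hg_nonneg z)]
    exact hg_le z
  have hglow_le : ∀ z, (ball x r).indicator (fun z => (r^n)⁻¹ * w z) z
      ≤ (r^n)⁻¹ * f (r⁻¹ • (x - z)) * w z := by
    intro z
    by_cases hz : z ∈ ball x r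
    · rw [indicator_of_mem hz, hmem1 z hz, mul_one]
    · rw [indicator_of_notMem hz]; exact hg_nonneg z
  have e_low : ∫ z, (ball x r).indicator (fun z => (r^n)⁻¹ * w z) z
      = (r^n)⁻¹ * ∫ z in ball x r, w z := by
    rw [integral_indicator measurableSet_ball, integral_const_mul]
  have e_up : ∫ z, (ball x R).indicator (fun z => (r^n)⁻¹ * w z) z
      = (r^n)⁻¹ * ∫ z in ball x R, w z := by
    rw [integral_indicator measurableSet_ball, integral_const_mul]
  constructor
  · calc (r^n)⁻¹ * ∫ z in ball x r, w z
        = ∫ z, (ball x r).indicator (fun z => (r^n)⁻¹ * w z) z := e_low.symm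
    _ ≤ ∫ z, (r^n)⁻¹ * f (r⁻¹ • (x - z)) * w z := integral_mono hlow_int hg_int hglow_le
  · calc ∫ z, (r^n)⁻¹ * f (r⁻¹ • (x - z)) * w z
        ≤ ∫ z, (ball x R).indicator (fun z => (r^n)⁻¹ * w z) z :=
          integral_mono hg_int hup_int hg_le
    _ = (r^n)⁻¹ * ∫ z in ball x R, w z := e_up
    _ ≤ (r^n)⁻¹ * ((1+ε) * ∫ z in ball x r, w z) := by
          refine mul_le_mul_of_nonneg_left ?_ (by positivity)
          rw [hR_def]; exact hkey x r hr
    _ = (1+ε) * ((r^n)⁻¹ * ∫ z in ball x r, w z) := by ring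
end
end
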